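/- Let 𝔤 be a finite-dimensional nilpotent real Lie algebra with a nondegenerate symmetric bilinear form g, let D be a derivation of 𝔤 with D + D* = 2a·id for some a ∈ ℝ (D* the g-adjoint), and let τ = ±1. If the metric g̃ = g + τe⁰⊗e⁰ on 𝔤 ⋊_D ℝe₀ is Einstein, then g is Ricci-flat. -/

import Mathlib

open LinearMap Module

noncomputable section

variable {V : Type} [AddCommGroup V] [Module ℝ V] [FiniteDimensional ℝ V]

/-- A Lie bracket on a real vector space, given as a bilinear map. -/
def IsLieBracket (br : V →ₗ[ℝ] V →ₗ[ℝ] V) : Prop :=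
  (∀ x y, br x y = - br y x) ∧
    ∀ x y z, br (br x y) z + br (br y z) x + br (br z x) y = 0

/-- Nilpotency of a Lie bracket: iterated adjoint maps of length `n` vanish. -/
def IsNilpotentBracket (br : V →ₗ[ℝ] V →ₗ[ℝ] V) : Prop :=
  ∃ n : ℕ, ∀ l : List V, l.length = n → ∀ x : V,
    l.foldr (fun v y => br v y) x = 0

/-- The derived series of a bracket. -/
def derivedSeriesB (br : V →ₗ[ℝ] V →ₗ[ℝ] V) : ℕ → Submodule ℝ V
  | 0 => ⊤
  | n + 1 => Submodule.span ℝ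
      {x | ∃ a ∈ derivedSeriesB br n, ∃ b ∈ derivedSeriesB br n, x = br a b}

/-- Solvability of a Lie bracket. -/
def IsSolvableBracket (br : V →ₗ[ℝ] V →ₗ[ℝ] V) : Prop :=
  ∃ n, derivedSeriesB br n = ⊥

/-- `D` is a derivation of the bracket `br`. -/
def IsDerivB (br : V →ₗ[ℝ] V →ₗ[ℝ] V) (D : V →ₗ[ℝ] V) : Prop :=
  ∀ x y, D (br x y) = br (D x) y + br x (D y)

/-- The musical isomorphism `♯` of a nondegenerate bilinear form. -/
def sharp (g : LinearMap.BilinForm ℝ V) (hg : g.Nondegenerate) :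
    Module.Dual ℝ V →ₗ[ℝ] V :=
  (LinearMap.BilinForm.toDual g hg).symm.toLinearMap

/-- The adjoint `f*` of an endomorphism with respect to `g` :
`g (f x) y = g x (f* y)` (for symmetric `g`). -/
def adjE (g : LinearMap.BilinForm ℝ V) (hg : g.Nondegenerate)
    (f : V →ₗ[ℝ] V) : V →ₗ[ℝ] V :=
  sharp g hg ∘ₗ ((LinearMap.llcomp ℝ V V ℝ).flip f ∘ₗ g.flip)

/-- The symmetric part `f^s = (f + f*)/2`. -/
def symPart (g : LinearMap.BilinForm ℝ V) (hg : g.Nondegenerate)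
    (f : V →ₗ[ℝ] V) : V →ₗ[ℝ] V := (2:ℝ)⁻¹ • (f + adjE g hg f)

/-- The skew-symmetric part `f^a = (f - f*)/2`. -/
def skewPart (g : LinearMap.BilinForm ℝ V) (hg : g.Nondegenerate)
    (f : V →ₗ[ℝ] V) : V →ₗ[ℝ] V := (2:ℝ)⁻¹ • (f - adjE g hg f)

/-- The endomorphism `A` associated to a bilinear form `β` by `g (A x) y = β x y`. -/
def endoOf (g : LinearMap.BilinForm ℝ V) (hg : g.Nondegenerate)
    (β : LinearMap.BilinForm ℝ V) : V →ₗ[ℝ] V := sharp g hg ∘ₗ β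

/-- The scalar product of two 1-forms: `g(α♯, β♯)`. -/
def inner1 (g : LinearMap.BilinForm ℝ V) (hg : g.Nondegenerate)
    (α β : Module.Dual ℝ V) : ℝ := g (sharp g hg α) (sharp g hg β)

/-- The scalar product of two endomorphisms: `Tr (f ∘ h*)`. -/
def innerEndo (g : LinearMap.BilinForm ℝ V) (hg : g.Nondegenerate)
    (f h : V →ₗ[ℝ] V) : ℝ := trace ℝ V (f ∘ₗ adjE g hg h)

/-- The scalar product of two 2-forms: `(1/2) Tr (A ∘ B*)`. -/
def inner2 (g : LinearMap.BilinForm ℝ V) (hg : g.Nondegenerate)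
    (α β : LinearMap.BilinForm ℝ V) : ℝ :=
  (2:ℝ)⁻¹ * trace ℝ V (endoOf g hg α ∘ₗ adjE g hg (endoOf g hg β))

/-- The 2-form `d(v♭) : (x, y) ↦ - g(v, [x,y])`. -/
def dflat (g : LinearMap.BilinForm ℝ V) (br : V →ₗ[ℝ] V →ₗ[ℝ] V)
    (v : V) : LinearMap.BilinForm ℝ V :=
  - ((LinearMap.llcomp ℝ V V ℝ (g v)) ∘ₗ br)

/-- The Ricci tensor of a metric Lie algebra:
`2 ric(v,w) = -Tr ad((v⌟dw♭ + w⌟dv♭)♯) + g(dv♭,dw♭) - g(ad v, ad w) - Tr(ad v ∘ ad w)`. -/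
def ricci (br : V →ₗ[ℝ] V →ₗ[ℝ] V) (g : LinearMap.BilinForm ℝ V)
    (hg : g.Nondegenerate) (v w : V) : ℝ :=
  (- trace ℝ V (br (sharp g hg (dflat g br w v + dflat g br v w)))
    + inner2 g hg (dflat g br v) (dflat g br w)
    - innerEndo g hg (br v) (br w)
    - trace ℝ V (br v ∘ₗ br w)) / 2

/-- A Sasaki structure `(φ, ξ, η, g)` on a Lie algebra with bracket `br`. -/
def IsSasaki (br : V →ₗ[ℝ] V →ₗ[ℝ] V) (g : LinearMap.BilinForm ℝ V)
    (φ : V →ₗ[ℝ] V) (ξ : V) (η : Module.Dual ℝ V) : Prop :=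
  η ξ = 1 ∧ (∀ x, η (φ x) = 0) ∧ (∀ x, φ (φ x) = - x + η x • ξ) ∧
    g ξ ξ = 1 ∧ (∀ x, η x = g ξ x) ∧
    (∀ x y, g (φ x) (φ y) = g x y - η x * η y) ∧
    (∀ x y, φ (φ (br x y)) + br (φ x) (φ y) - φ (br (φ x) y)
        - φ (br x (φ y)) - η (br x y) • ξ = 0) ∧
    (∀ x y, - η (br x y) = 2 * g x (φ y))

/-- A pseudo-Kähler structure `(g, J, ω)`, where `ω (x, y) = g (x, J y)`. -/
def IsPseudoKahler (br : V →ₗ[ℝ] V →ₗ[ℝ] V) (g : LinearMap.BilinForm ℝ V)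
    (J : V →ₗ[ℝ] V) : Prop :=
  (∀ x, J (J x) = - x) ∧ (∀ x y, g (J x) (J y) = g x y) ∧
    (∀ x y, br (J x) (J y) - J (br (J x) y) - J (br x (J y)) - br x y = 0) ∧
    (∀ x y z, g (br x y) (J z) + g (br y z) (J x) + g (br z x) (J y) = 0)


section AuxLemmas

variable {W : Type} [AddCommGroup W] [Module ℝ W] [FiniteDimensional ℝ W]

lemma sharp_spec (g : LinearMap.BilinForm ℝ W) (hg : g.Nondegenerate)
    (α : Module.Dual ℝ W) (y : W) : g (sharp g hg α) y = α y :=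
  LinearMap.BilinForm.apply_toDual_symm_apply α y

lemma sharp_eq (g : LinearMap.BilinForm ℝ W) (hg : g.Nondegenerate)
    (α : Module.Dual ℝ W) (p : W) (h : ∀ y, g p y = α y) :
    sharp g hg α = p := by
  refine eq_of_sub_eq_zero (hg.1 _ fun y => ?_)
  rw [LinearMap.map_sub, LinearMap.sub_apply, sharp_spec, h, sub_self]

lemma adjE_apply (g : LinearMap.BilinForm ℝ W) (hg : g.Nondegenerate)
    (f : W →ₗ[ℝ] W) (y : W) : adjE g hg f y = sharp g hg (g.flip y ∘ₗ f) := rfl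

lemma adj_spec (g : LinearMap.BilinForm ℝ W) (hsym : ∀ x y, g x y = g y x)
    (hg : g.Nondegenerate) (f : W →ₗ[ℝ] W) (x y : W) :
    g x (adjE g hg f y) = g (f x) y := by
  rw [hsym, adjE_apply, sharp_spec]; rfl

lemma adj_eq (g : LinearMap.BilinForm ℝ W) (hsym : ∀ x y, g x y = g y x)
    (hg : g.Nondegenerate) (f h : W →ₗ[ℝ] W)
    (H : ∀ x y, g (f x) y = g x (h y)) : adjE g hg f = h := by
  ext y
  refine eq_of_sub_eq_zero (hg.1 _ fun x => ?_)
  rw [LinearMap.map_sub, LinearMap.sub_apply]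
  have : g (adjE g hg f y) x = g (h y) x := by
    rw [← hsym x, adj_spec g hsym hg, H, hsym]
  rw [this, sub_self]

lemma dflat_apply (g : LinearMap.BilinForm ℝ W) (br : W →ₗ[ℝ] W →ₗ[ℝ] W)
    (v x y : W) : dflat g br v x y = -(g v (br x y)) := rfl

lemma endoOf_apply (g : LinearMap.BilinForm ℝ W) (hg : g.Nondegenerate)
    (β : LinearMap.BilinForm ℝ W) (x : W) :
    endoOf g hg β x = sharp g hg (β x) := rfl

lemma adj_endoOf_skew (g : LinearMap.BilinForm ℝ W) (hsym : ∀ x y, g x y = g y x)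
    (hg : g.Nondegenerate) (β : LinearMap.BilinForm ℝ W)
    (hβ : ∀ x y, β x y = - β y x) :
    adjE g hg (endoOf g hg β) = - endoOf g hg β := by
  refine adj_eq g hsym hg _ _ fun x y => ?_
  have h1 : ∀ z u, g (endoOf g hg β z) u = β z u := fun z u => sharp_spec g hg (β z) u
  rw [LinearMap.neg_apply, LinearMap.map_neg, h1, hsym, h1, hβ y x, neg_neg]

lemma trace_real (f : ℝ →ₗ[ℝ] ℝ) : trace ℝ ℝ f = f 1 := by
  have hf : f = f 1 • LinearMap.id := by
    ext x
    simp [mul_comm]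
  rw [hf, map_smul, trace_id, Module.finrank_self]
  simp

lemma trace_rankOne (φ : W →ₗ[ℝ] ℝ) (u : W) :
    trace ℝ W (LinearMap.toSpanSingleton ℝ W u ∘ₗ φ) = φ u := by
  rw [LinearMap.trace_comp_comm', trace_real]
  simp [LinearMap.toSpanSingleton]

lemma trace_prodR (F : (W × ℝ) →ₗ[ℝ] (W × ℝ)) :
    trace ℝ (W × ℝ) F
      = trace ℝ W (fst ℝ W ℝ ∘ₗ F ∘ₗ inl ℝ W ℝ)
        + trace ℝ ℝ (snd ℝ W ℝ ∘ₗ F ∘ₗ inr ℝ W ℝ) := by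
  have hF : F = inl ℝ W ℝ ∘ₗ (fst ℝ W ℝ ∘ₗ F) + inr ℝ W ℝ ∘ₗ (snd ℝ W ℝ ∘ₗ F) := by
    ext x <;> simp
  conv_lhs => rw [hF]
  rw [map_add,
    LinearMap.trace_comp_comm' (fst ℝ W ℝ ∘ₗ F) (inl ℝ W ℝ),
    LinearMap.trace_comp_comm' (snd ℝ W ℝ ∘ₗ F) (inr ℝ W ℝ)]
  rfl

lemma trace_br_zero (br : W →ₗ[ℝ] W →ₗ[ℝ] W)
    (hnil : IsNilpotentBracket br) (u : W) :
    trace ℝ W (br u) = 0 := by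
  obtain ⟨n, hn⟩ := hnil
  have hpow : ∀ (m : ℕ) (x : W),
      ((br u) ^ m) x = (List.replicate m u).foldr (fun v y => br v y) x := by
    intro m
    induction m with
    | zero => intro x; simp
    | succ k ih =>
        intro x
        rw [pow_succ', Module.End.mul_apply, List.replicate_succ, List.foldr_cons, ← ih]
  have hNil : IsNilpotent (br u) := by
    refine ⟨n, ?_⟩
    ext x
    simpa [hpow] using hn (List.replicate n u) (by simp) x
  exact (LinearMap.isNilpotent_trace_of_isNilpotent hNil).eq_zero

end AuxLemmas

/-- if a standard extension by a derivation with `D^s = a·id` is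
Einstein, then the nilpotent Lie algebra is Ricci-flat. -/
theorem ricci_flat_of_einstein_extension_deriv_sym_smul_id
    {V : Type} [AddCommGroup V] [Module ℝ V] [FiniteDimensional ℝ V]
    (br : V →ₗ[ℝ] V →ₗ[ℝ] V) (hbr : IsLieBracket br)
    (hnil : IsNilpotentBracket br)
    (g : LinearMap.BilinForm ℝ V) (hsym : ∀ x y, g x y = g y x)
    (hg : g.Nondegenerate)
    (D : V →ₗ[ℝ] V) (hD : IsDerivB br D)
    (a : ℝ)
    (hDs : D + adjE g hg D = (2 * a) • (LinearMap.id : V →ₗ[ℝ] V))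
    (τ : ℝ) (hτ : τ = 1 ∨ τ = -1)
    (brT : (V × ℝ) →ₗ[ℝ] (V × ℝ) →ₗ[ℝ] (V × ℝ))
    (hbrT : ∀ p q : V × ℝ,
      brT p q = (br p.1 q.1 + p.2 • D q.1 - q.2 • D p.1, 0))
    (gT : LinearMap.BilinForm ℝ (V × ℝ))
    (hgT : ∀ p q : V × ℝ, gT p q = g p.1 q.1 + τ * p.2 * q.2)
    (hgTnd : gT.Nondegenerate)
    (hEinstein : ∃ lam : ℝ, ∀ p q, ricci brT gT hgTnd p q = lam * gT p q) :
    ∀ v w : V, ricci br g hg v w = 0 := by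
  intro v w
  obtain ⟨lam, hE⟩ := hEinstein
  have hτ2 : τ * τ = 1 := by rcases hτ with h | h <;> rw [h] <;> norm_num
  have hskew : ∀ x y : V, br x y = - br y x := hbr.1
  have hgTsym : ∀ p q : V × ℝ, gT p q = gT q p := by
    intro p q; rw [hgT, hgT, hsym]; ring
  have hbrTskew : ∀ p q : V × ℝ, brT p q = - brT q p := by
    intro p q
    rw [hbrT, hbrT, hskew]
    apply Prod.ext <;> simp <;> abel
  set Ds := adjE g hg D with hDsdef
  have hadj : ∀ x y : V, g x (Ds y) = g (D x) y := fun x y => adj_spec g hsym hg D x y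
  have hDsum : ∀ x : V, D x + Ds x = (2 * a) • x := by
    intro x
    have h := LinearMap.ext_iff.mp hDs x
    simpa using h
  have hDsv : ∀ x y : V, g (Ds x) y = g x (D y) := by
    intro x y
    rw [hsym, hadj y x, hsym]
  have hgDw : ∀ x y : V, g (D x) y + g x (D y) = (2 * a) * g x y := by
    intro x y
    rw [← hDsv x y, ← LinearMap.add_apply, ← map_add, hDsum x, map_smul,
      LinearMap.smul_apply, smul_eq_mul]
  have hDspt : ∀ x : V, Ds x = (2 * a) • x - D x := by
    intro x
    have h := hDsum x
    linear_combination (norm := module) h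
  have gDD : g (Ds v) (Ds w) = g (D v) (D w) := by
    rw [hDspt, hDspt]
    simp only [map_sub, map_smul, LinearMap.sub_apply, LinearMap.smul_apply, smul_eq_mul]
    linear_combination (-(2 * a)) * hgDw v w
  have hsharpT : ∀ φ : Module.Dual ℝ (V × ℝ),
      sharp gT hgTnd φ = (sharp g hg (φ ∘ₗ inl ℝ V ℝ), τ * φ (0, 1)) := by
    intro φ
    refine sharp_eq gT hgTnd φ _ fun y => ?_
    have hy : y = inl ℝ V ℝ y.1 + y.2 • ((0 : V), (1 : ℝ)) := by
      apply Prod.ext <;> simp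
    rw [hgT]
    calc g (sharp g hg (φ ∘ₗ inl ℝ V ℝ)) y.1 + τ * (τ * φ (0, 1)) * y.2
        = φ (inl ℝ V ℝ y.1) + y.2 * φ ((0 : V), (1 : ℝ)) := by
          rw [sharp_spec]
          have h2 : τ * (τ * φ (0, 1)) * y.2 = (τ * τ) * (y.2 * φ (0, 1)) := by ring
          rw [h2, hτ2, one_mul]
          rfl
      _ = φ y := by
          conv_rhs => rw [hy]
          rw [map_add, map_smul, smul_eq_mul]
  set T : ℝ := trace ℝ V D with hTdef
  -- KEY 2 : ricci at (e₀, e₀)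
  have key2 : ricci brT gT hgTnd ((0 : V), (1 : ℝ)) ((0 : V), (1 : ℝ)) = -(a * T) := by
    have hd0 : dflat gT brT ((0 : V), (1 : ℝ)) = 0 := by
      refine LinearMap.ext₂ fun x y => ?_
      rw [dflat_apply, hbrT, hgT]
      simp
    have hbrTe : ∀ q : V × ℝ, brT ((0 : V), (1 : ℝ)) q = (D q.1, 0) := by
      intro q
      rw [hbrT]
      simp
    have hadjTe : adjE gT hgTnd (brT ((0 : V), (1 : ℝ)))
        = inl ℝ V ℝ ∘ₗ Ds ∘ₗ fst ℝ V ℝ := by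
      refine adj_eq gT hgTsym hgTnd _ _ fun x y => ?_
      rw [hbrTe, hgT, hgT]
      simp [hadj]
    have hT3 : trace ℝ (V × ℝ) (brT ((0 : V), (1 : ℝ)) ∘ₗ adjE gT hgTnd (brT ((0 : V), (1 : ℝ))))
        = trace ℝ V (D ∘ₗ Ds) := by
      rw [hadjTe, trace_prodR]
      have h1 : fst ℝ V ℝ ∘ₗ (brT ((0 : V), (1 : ℝ)) ∘ₗ (inl ℝ V ℝ ∘ₗ Ds ∘ₗ fst ℝ V ℝ)) ∘ₗ inl ℝ V ℝ
          = D ∘ₗ Ds := by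
        ext y; simp [hbrTe]
      have h2 : snd ℝ V ℝ ∘ₗ (brT ((0 : V), (1 : ℝ)) ∘ₗ (inl ℝ V ℝ ∘ₗ Ds ∘ₗ fst ℝ V ℝ)) ∘ₗ inr ℝ V ℝ
          = 0 := by
        ext t; simp [hbrTe]
      rw [h1, h2, map_zero, add_zero]
    have hT4 : trace ℝ (V × ℝ) (brT ((0 : V), (1 : ℝ)) ∘ₗ brT ((0 : V), (1 : ℝ)))
        = trace ℝ V (D ∘ₗ D) := by
      rw [trace_prodR]
      have h1 : fst ℝ V ℝ ∘ₗ (brT ((0 : V), (1 : ℝ)) ∘ₗ brT ((0 : V), (1 : ℝ))) ∘ₗ inl ℝ V ℝ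
          = D ∘ₗ D := by
        ext y; simp [hbrTe]
      have h2 : snd ℝ V ℝ ∘ₗ (brT ((0 : V), (1 : ℝ)) ∘ₗ brT ((0 : V), (1 : ℝ))) ∘ₗ inr ℝ V ℝ
          = 0 := by
        ext t; simp [hbrTe]
      rw [h1, h2, map_zero, add_zero]
    have hsum : trace ℝ V (D ∘ₗ Ds) + trace ℝ V (D ∘ₗ D) = 2 * a * T := by
      rw [← map_add, ← LinearMap.comp_add]
      have h3 : Ds + D = (2 * a) • (LinearMap.id : V →ₗ[ℝ] V) := by
        rw [add_comm]; exact hDs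
      rw [h3, LinearMap.comp_smul, LinearMap.comp_id, map_smul, smul_eq_mul, hTdef]
    rw [ricci, hd0]
    have hz1 : (0 : LinearMap.BilinForm ℝ (V × ℝ)) ((0 : V), (1 : ℝ))
        + (0 : LinearMap.BilinForm ℝ (V × ℝ)) ((0 : V), (1 : ℝ)) = 0 := by simp
    rw [hz1, map_zero, map_zero, map_zero]
    have hz2 : inner2 gT hgTnd 0 0 = 0 := by
      rw [inner2]
      have h4 : endoOf gT hgTnd 0 = 0 := by
        refine LinearMap.ext fun x => ?_
        simp [endoOf_apply]
      rw [h4, LinearMap.zero_comp, map_zero, mul_zero]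
    rw [hz2, innerEndo, hT3, hT4]
    linarith [hsum]
  -- KEY 1 : ricci at ((v,0),(w,0))
  have key1 : ricci brT gT hgTnd (v, (0 : ℝ)) (w, (0 : ℝ))
      = ricci br g hg v w - τ * a * T * g v w := by
    -- the ψ form
    have hψinl : (dflat gT brT (w, (0:ℝ)) (v, (0:ℝ)) + dflat gT brT (v, (0:ℝ)) (w, (0:ℝ))) ∘ₗ inl ℝ V ℝ
        = dflat g br w v + dflat g br v w := by
      refine LinearMap.ext fun y => ?_
      simp only [LinearMap.comp_apply, LinearMap.add_apply, dflat_apply, LinearMap.inl_apply,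
        hbrT, hgT]
      simp
    have hψ0 : (dflat gT brT (w, (0:ℝ)) (v, (0:ℝ)) + dflat gT brT (v, (0:ℝ)) (w, (0:ℝ))) ((0:V), (1:ℝ))
        = 2 * a * g v w := by
      simp only [LinearMap.add_apply, dflat_apply, hbrT, hgT]
      simp
      rw [hsym w (D v)]
      linarith [hgDw v w]
    have hsharpψ : sharp gT hgTnd (dflat gT brT (w, (0:ℝ)) (v, (0:ℝ)) + dflat gT brT (v, (0:ℝ)) (w, (0:ℝ)))
        = (sharp g hg (dflat g br w v + dflat g br v w), τ * (2 * a * g v w)) := by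
      rw [hsharpT, hψinl, hψ0]
    -- term 1
    have hT1 : trace ℝ (V × ℝ) (brT (sharp g hg (dflat g br w v + dflat g br v w), τ * (2 * a * g v w)))
        = τ * (2 * a * g v w) * T := by
      rw [trace_prodR]
      have h1 : fst ℝ V ℝ ∘ₗ brT (sharp g hg (dflat g br w v + dflat g br v w), τ * (2 * a * g v w)) ∘ₗ inl ℝ V ℝ
          = br (sharp g hg (dflat g br w v + dflat g br v w)) + (τ * (2 * a * g v w)) • D := by
        refine LinearMap.ext fun y => ?_
        simp [hbrT]
      have h2 : snd ℝ V ℝ ∘ₗ brT (sharp g hg (dflat g br w v + dflat g br v w), τ * (2 * a * g v w)) ∘ₗ inr ℝ V ℝ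
          = 0 := by
        refine LinearMap.ext fun t => ?_
        simp [hbrT]
      rw [h1, h2, map_zero, add_zero, map_add, map_smul, trace_br_zero br hnil,
        smul_eq_mul, hTdef]
      ring
    -- the endomorphism of dflat on the extension
    have hAv : ∀ (z : V) (x : V × ℝ), endoOf gT hgTnd (dflat gT brT (z, (0:ℝ))) x
        = (endoOf g hg (dflat g br z) x.1 - x.2 • Ds z, τ * g (Ds z) x.1) := by
      intro z x
      rw [endoOf_apply, hsharpT]
      refine Prod.ext ?_ ?_
      · refine sharp_eq g hg _ _ fun y => ?_
        rw [map_sub, map_smul, LinearMap.sub_apply, LinearMap.smul_apply, smul_eq_mul,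
          endoOf_apply, sharp_spec, dflat_apply, hDsv z y]
        simp only [LinearMap.comp_apply, LinearMap.inl_apply, dflat_apply, hbrT, hgT]
        simp
        ring
      · simp only [dflat_apply, hbrT, hgT]
        rw [hDsv z x.1]
        simp
    -- trace of the composition of the two extension endomorphisms
    have hT2tr : trace ℝ (V × ℝ) (endoOf gT hgTnd (dflat gT brT (v, (0:ℝ))) ∘ₗ endoOf gT hgTnd (dflat gT brT (w, (0:ℝ))))
        = trace ℝ V (endoOf g hg (dflat g br v) ∘ₗ endoOf g hg (dflat g br w))
          - 2 * (τ * g (Ds v) (Ds w)) := by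
      rw [trace_prodR]
      have h1 : fst ℝ V ℝ ∘ₗ (endoOf gT hgTnd (dflat gT brT (v, (0:ℝ))) ∘ₗ endoOf gT hgTnd (dflat gT brT (w, (0:ℝ)))) ∘ₗ inl ℝ V ℝ
          = endoOf g hg (dflat g br v) ∘ₗ endoOf g hg (dflat g br w)
            - LinearMap.toSpanSingleton ℝ V (Ds v) ∘ₗ (τ • (g (Ds w))) := by
        refine LinearMap.ext fun y => ?_
        simp only [LinearMap.comp_apply, LinearMap.fst_apply, LinearMap.inl_apply,
          LinearMap.sub_apply, LinearMap.smul_apply, LinearMap.toSpanSingleton_apply, hAv]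
        simp
      have h2 : (snd ℝ V ℝ ∘ₗ (endoOf gT hgTnd (dflat gT brT (v, (0:ℝ))) ∘ₗ endoOf gT hgTnd (dflat gT brT (w, (0:ℝ)))) ∘ₗ inr ℝ V ℝ) 1
          = -(τ * g (Ds v) (Ds w)) := by
        simp [hAv]
      rw [h1, trace_real, h2, map_sub, trace_rankOne]
      simp only [LinearMap.smul_apply, smul_eq_mul]
      rw [hsym (Ds w) (Ds v)]
      ring
    -- inner2 comparison
    have hadjAwT : adjE gT hgTnd (endoOf gT hgTnd (dflat gT brT (w, (0:ℝ))))
        = - endoOf gT hgTnd (dflat gT brT (w, (0:ℝ))) :=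
      adj_endoOf_skew gT hgTsym hgTnd _ (fun x y => by
        rw [dflat_apply, dflat_apply, hbrTskew x y, map_neg, neg_neg])
    have hadjAw : adjE g hg (endoOf g hg (dflat g br w)) = - endoOf g hg (dflat g br w) :=
      adj_endoOf_skew g hsym hg _ (fun x y => by
        rw [dflat_apply, dflat_apply, hskew x y, map_neg, neg_neg])
    have hi2T : inner2 gT hgTnd (dflat gT brT (v, (0:ℝ))) (dflat gT brT (w, (0:ℝ)))
        = inner2 g hg (dflat g br v) (dflat g br w) + τ * g (D v) (D w) := by
      rw [inner2, inner2, hadjAwT, hadjAw, LinearMap.comp_neg, LinearMap.comp_neg,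
        map_neg, map_neg, hT2tr, gDD]
      ring
    -- term 3
    have hLw : adjE gT hgTnd (brT (w, (0:ℝ)))
        = LinearMap.prod (adjE g hg (br w) ∘ₗ fst ℝ V ℝ) ((-τ) • ((g (D w)) ∘ₗ fst ℝ V ℝ)) := by
      refine adj_eq gT hgTsym hgTnd _ _ fun x y => ?_
      rw [hbrT, hgT, hgT]
      simp only [LinearMap.prod_apply, Pi.prod, Function.prod, LinearMap.comp_apply, LinearMap.smul_apply,
        LinearMap.fst_apply, smul_eq_mul]
      rw [adj_spec g hsym hg (br w)]
      simp only [map_sub, map_add, map_smul, LinearMap.sub_apply, LinearMap.add_apply,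
        LinearMap.smul_apply, smul_eq_mul]
      simp
      linear_combination (x.2 * (g (D w)) y.1) * hτ2
    have hT3 : trace ℝ (V × ℝ) (brT (v, (0:ℝ)) ∘ₗ adjE gT hgTnd (brT (w, (0:ℝ))))
        = trace ℝ V (br v ∘ₗ adjE g hg (br w)) + τ * g (D v) (D w) := by
      rw [hLw, trace_prodR]
      have h1 : fst ℝ V ℝ ∘ₗ (brT (v, (0:ℝ)) ∘ₗ LinearMap.prod (adjE g hg (br w) ∘ₗ fst ℝ V ℝ) ((-τ) • ((g (D w)) ∘ₗ fst ℝ V ℝ))) ∘ₗ inl ℝ V ℝ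
          = br v ∘ₗ adjE g hg (br w) + LinearMap.toSpanSingleton ℝ V (D v) ∘ₗ (τ • (g (D w))) := by
        refine LinearMap.ext fun y => ?_
        simp only [LinearMap.comp_apply, LinearMap.fst_apply, LinearMap.inl_apply,
          LinearMap.prod_apply, Pi.prod, LinearMap.add_apply, LinearMap.smul_apply,
          LinearMap.toSpanSingleton_apply, hbrT, smul_eq_mul]
        simp
      have h2 : snd ℝ V ℝ ∘ₗ (brT (v, (0:ℝ)) ∘ₗ LinearMap.prod (adjE g hg (br w) ∘ₗ fst ℝ V ℝ) ((-τ) • ((g (D w)) ∘ₗ fst ℝ V ℝ))) ∘ₗ inr ℝ V ℝ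
          = 0 := by
        refine LinearMap.ext fun t => ?_
        simp [hbrT]
      rw [h1, h2, map_zero, add_zero, map_add, trace_rankOne]
      simp only [LinearMap.smul_apply, smul_eq_mul]
      rw [hsym (D w) (D v)]
    -- term 4
    have hT4 : trace ℝ (V × ℝ) (brT (v, (0:ℝ)) ∘ₗ brT (w, (0:ℝ))) = trace ℝ V (br v ∘ₗ br w) := by
      rw [trace_prodR]
      have h1 : fst ℝ V ℝ ∘ₗ (brT (v, (0:ℝ)) ∘ₗ brT (w, (0:ℝ))) ∘ₗ inl ℝ V ℝ = br v ∘ₗ br w := by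
        refine LinearMap.ext fun y => ?_
        simp [hbrT]
      have h2 : snd ℝ V ℝ ∘ₗ (brT (v, (0:ℝ)) ∘ₗ brT (w, (0:ℝ))) ∘ₗ inr ℝ V ℝ = 0 := by
        refine LinearMap.ext fun t => ?_
        simp [hbrT]
      rw [h1, h2, map_zero, add_zero]
    -- assemble key1
    rw [ricci, ricci, hsharpψ, hT1, innerEndo, innerEndo, hT3, hT4, hi2T,
      trace_br_zero br hnil]
    ring
  -- assemble
  have hgTee : gT ((0 : V), (1 : ℝ)) ((0 : V), (1 : ℝ)) = τ := by rw [hgT]; simp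
  have hgTvw : gT (v, (0 : ℝ)) (w, (0 : ℝ)) = g v w := by rw [hgT]; simp
  have e1 := hE ((0 : V), (1 : ℝ)) ((0 : V), (1 : ℝ))
  rw [key2, hgTee] at e1
  have e2 := hE (v, (0 : ℝ)) (w, (0 : ℝ))
  rw [key1, hgTvw] at e2
  linear_combination e2 - τ * g v w * e1 - lam * g v w * hτ2
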